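/- Let (X,r) be a left nondegenerate idempotent braided set with X = {x₁,…,x_n} finite, n ≥ 2, and let k be a field. Let A = k[S(X,r)] be the Yang–Baxter algebra, regarded as a left module over the polynomial ring k[t] via the algebra homomorphism k[t] → A sending t to the class [x₁]. Then A is a free left k[t]-module of rank n, with basis (1, [x₂], …, [x_n]). -/

import Mathlib

/-- `r` applied to the first two factors of `X × X × X`. -/
def rOneMap {X : Type*} (r : X × X → X × X) : X × X × X → X × X × X :=
  fun p => ((r (p.1, p.2.1)).1, (r (p.1, p.2.1)).2, p.2.2)

/-- `r` applied to the last two factors of `X × X × X`. -/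
def rTwoMap {X : Type*} (r : X × X → X × X) : X × X × X → X × X × X :=
  fun p => (p.1, (r (p.2.1, p.2.2)).1, (r (p.2.1, p.2.2)).2)

/-- `(X, r)` is a braided set (set-theoretic solution of the Yang–Baxter equation). -/
def IsBraided {X : Type*} (r : X × X → X × X) : Prop :=
  rOneMap r ∘ rTwoMap r ∘ rOneMap r = rTwoMap r ∘ rOneMap r ∘ rTwoMap r

/-- The defining relations of the Yang–Baxter monoid: `xy ~ x'y'` whenever
`r (x, y) = (x', y')`. -/
def ybRel {X : Type*} (r : X × X → X × X) : FreeMonoid X → FreeMonoid X → Prop :=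
  fun a b => ∃ x y : X,
    a = FreeMonoid.of x * FreeMonoid.of y ∧
    b = FreeMonoid.of (r (x, y)).1 * FreeMonoid.of (r (x, y)).2

/-- The congruence on the free monoid on `X` generated by the Yang–Baxter relations;
the Yang–Baxter monoid `S(X, r)` is its quotient. -/
def ybCon {X : Type*} (r : X × X → X × X) : Con (FreeMonoid X) := conGen (ybRel r)

namespace Stmt7Aux

variable {X : Type*} (r : X × X → X × X)

theorem braid1 (hbr : IsBraided r) (x y z : X) :
    (r ((r (x, y)).1, (r ((r (x, y)).2, z)).1)).1 = (r (x, (r (y, z)).1)).1 := by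
  have h := congrFun hbr (x, y, z)
  exact congrArg (fun t : X × X × X => t.1) h

theorem idem1 (hidem : r ∘ r = r) (x y : X) :
    (r ((r (x, y)).1, (r (x, y)).2)).1 = (r (x, y)).1 :=
  congrArg Prod.fst (congrFun hidem (x, y))

section LND

variable (hlnd : ∀ x : X, Function.Bijective fun y => (r (x, y)).1)

/-- The left action as an equivalence. -/
noncomputable def ell (x : X) : X ≃ X := Equiv.ofBijective _ (hlnd x)

/-- `μ a = λ_a⁻¹ a`. -/
noncomputable def mu (a : X) : X := (ell r hlnd a).symm a

/-- `φ = λ_q⁻¹`. -/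
noncomputable def phi (q : X) (c : X) : X := (ell r hlnd q).symm c

theorem ell_mu (a : X) : (r (a, mu r hlnd a)).1 = a :=
  (ell r hlnd a).apply_symm_apply a

theorem ell_phi (q c : X) : (r (q, phi r hlnd q c)).1 = c :=
  (ell r hlnd q).apply_symm_apply c

theorem snd_eq_mu (hidem : r ∘ r = r) (x y : X) :
    (r (x, y)).2 = mu r hlnd ((r (x, y)).1) := by
  apply (ell r hlnd ((r (x, y)).1)).injective
  show (r ((r (x, y)).1, (r (x, y)).2)).1 = (r ((r (x, y)).1, mu r hlnd ((r (x, y)).1))).1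
  rw [idem1 r hidem, ell_mu]

theorem braid1' (hbr : IsBraided r) (hidem : r ∘ r = r) (x y z : X) :
    (r ((r (x, y)).1, (r (mu r hlnd ((r (x, y)).1), z)).1)).1 = (r (x, (r (y, z)).1)).1 := by
  rw [← snd_eq_mu r hlnd hidem x y]; exact braid1 r hbr x y z

theorem q_push (hbr : IsBraided r) (hidem : r ∘ r = r) (q c w : X) :
    (r (q, (r (phi r hlnd q c, w)).1)).1 = (r (c, (r (mu r hlnd c, w)).1)).1 := by
  have h := braid1' r hlnd hbr hidem q (phi r hlnd q c) w
  rw [ell_phi] at h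
  exact h.symm

theorem key2 (hbr : IsBraided r) (hidem : r ∘ r = r) (q s x y : X) :
    (r (phi r hlnd q ((r (s, (r (x, y)).1)).1), (r (x, y)).2)).1
      = (r (phi r hlnd q ((r (s, x)).1), y)).1 := by
  apply (ell r hlnd q).injective
  show (r (q, (r (phi r hlnd q ((r (s, (r (x, y)).1)).1), (r (x, y)).2)).1)).1
      = (r (q, (r (phi r hlnd q ((r (s, x)).1), y)).1)).1
  rw [snd_eq_mu r hlnd hidem x y]
  rw [q_push r hlnd hbr hidem, q_push r hlnd hbr hidem]
  rw [braid1' r hlnd hbr hidem s (r (x, y)).1 (mu r hlnd ((r (x, y)).1)),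
    braid1' r hlnd hbr hidem s x y]
  rw [ell_mu]

/-- One step of the invariant state machine. -/
noncomputable def stepT (q : X) : Option X → X → Option X
  | none, x => some x
  | some s, x => some (phi r hlnd q ((r (s, x)).1))

theorem two_step (hbr : IsBraided r) (hidem : r ∘ r = r) (q : X) (p : Option X) (x y : X) :
    stepT r hlnd q (stepT r hlnd q p x) y
      = stepT r hlnd q (stepT r hlnd q p (r (x, y)).1) (r (x, y)).2 := by
  cases p with
  | none =>
      show some (phi r hlnd q ((r (x, y)).1))
        = some (phi r hlnd q ((r ((r (x, y)).1, (r (x, y)).2)).1))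
      rw [idem1 r hidem]
  | some s =>
      show some (phi r hlnd q ((r (phi r hlnd q ((r (s, x)).1), y)).1))
        = some (phi r hlnd q ((r (phi r hlnd q ((r (s, (r (x, y)).1)).1), (r (x, y)).2)).1))
      rw [key2 r hlnd hbr hidem]

/-- The invariant congruence: two words are related iff they have the same length and
the same state-machine result from every initial state. -/
noncomputable def invCon (q : X) : Con (FreeMonoid X) where
  r a b := (FreeMonoid.toList a).length = (FreeMonoid.toList b).length ∧
    ∀ p : Option X, (FreeMonoid.toList a).foldl (stepT r hlnd q) p
      = (FreeMonoid.toList b).foldl (stepT r hlnd q) p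
  iseqv := ⟨fun _ => ⟨rfl, fun _ => rfl⟩, fun h => ⟨h.1.symm, fun p => (h.2 p).symm⟩,
    fun h1 h2 => ⟨h1.1.trans h2.1, fun p => (h1.2 p).trans (h2.2 p)⟩⟩
  mul' := by
    rintro a b c d ⟨h1, h2⟩ ⟨h3, h4⟩
    constructor
    · simp only [FreeMonoid.toList_mul, List.length_append, h1, h3]
    · intro p
      simp only [FreeMonoid.toList_mul, List.foldl_append, h2 p, h4]

theorem ybCon_le_invCon (hbr : IsBraided r) (hidem : r ∘ r = r) (q : X) :
    ybCon r ≤ invCon r hlnd q := by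
  apply Con.conGen_le.mpr
  rintro a b ⟨x, y, rfl, rfl⟩
  constructor
  · simp [FreeMonoid.toList_mul, FreeMonoid.toList_of]
  · intro p
    simp only [FreeMonoid.toList_mul, FreeMonoid.toList_of, List.foldl_cons, List.foldl_nil,
      List.singleton_append]
    exact two_step r hlnd hbr hidem q p x y

theorem two_letter (hidem : r ∘ r = r) (q z y : X) :
    ybCon r (FreeMonoid.of z * FreeMonoid.of y)
      (FreeMonoid.of q * FreeMonoid.of (phi r hlnd q ((r (z, y)).1))) := by
  have h1 : ybCon r (FreeMonoid.of z * FreeMonoid.of y)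
      (FreeMonoid.of (r (z, y)).1 * FreeMonoid.of (r (z, y)).2) :=
    ConGen.Rel.of _ _ ⟨z, y, rfl, rfl⟩
  have hr : r (q, phi r hlnd q ((r (z, y)).1)) = ((r (z, y)).1, (r (z, y)).2) := by
    have h2 := ell_phi r hlnd q ((r (z, y)).1)
    refine Prod.ext h2 ?_
    rw [snd_eq_mu r hlnd hidem q (phi r hlnd q ((r (z, y)).1)), h2,
      ← snd_eq_mu r hlnd hidem z y]
  have h3 : ybCon r (FreeMonoid.of q * FreeMonoid.of (phi r hlnd q ((r (z, y)).1)))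
      (FreeMonoid.of (r (z, y)).1 * FreeMonoid.of (r (z, y)).2) :=
    ConGen.Rel.of _ _ ⟨q, phi r hlnd q ((r (z, y)).1), rfl, by rw [hr]⟩
  exact h1.trans ((ybCon r).symm h3)

end LND

/-- The normal-form word `q^a * x_i` (with `x_{i0} = q` contributing no extra letter). -/
def nfWord {n : ℕ} (e : Fin n ≃ X) (i0 : Fin n) (a : ℕ) (i : Fin n) : FreeMonoid X :=
  FreeMonoid.ofList (List.replicate a (e i0)) * (if i = i0 then 1 else FreeMonoid.of (e i))

theorem toList_nfWord {n : ℕ} (e : Fin n ≃ X) (i0 : Fin n) (a : ℕ) (i : Fin n) :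
    FreeMonoid.toList (nfWord e i0 a i)
      = List.replicate a (e i0) ++ (if i = i0 then [] else [e i]) := by
  unfold nfWord
  split <;> simp [FreeMonoid.toList_mul]

theorem step_nfWord {n : ℕ} (e : Fin n ≃ X) (i0 : Fin n) (a : ℕ) (y : X) :
    ∃ p : ℕ × Fin n,
      FreeMonoid.ofList (List.replicate a (e i0)) * FreeMonoid.of y = nfWord e i0 p.1 p.2 := by
  by_cases h : y = e i0
  · refine ⟨(a + 1, i0), ?_⟩
    subst h
    rw [nfWord, if_pos rfl, mul_one, List.replicate_succ', FreeMonoid.ofList_append,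
      FreeMonoid.ofList_singleton]
  · refine ⟨(a, e.symm y), ?_⟩
    rw [nfWord, if_neg fun hc => h (by rw [← hc, Equiv.apply_symm_apply]),
      Equiv.apply_symm_apply]

theorem ofList_replicate_pow (q : X) (a : ℕ) :
    FreeMonoid.ofList (List.replicate a q) = FreeMonoid.of q ^ a := by
  induction a with
  | zero => rfl
  | succ a ih =>
      rw [pow_succ, ← ih, List.replicate_succ', FreeMonoid.ofList_append,
        FreeMonoid.ofList_singleton]

end Stmt7Aux

open Stmt7Aux in
/-- Let `(X, r)` be a left nondegenerate idempotent braided set with an enumeration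
`X = {x₁, …, xₙ}`, `n ≥ 2`, and `k` a field. Regard the Yang–Baxter algebra
`A = k[S(X, r)]` as a left `k[t]`-module via the algebra map `k[t] → A`, `t ↦ [x₁]`.
Then `A` is free of rank `n` with basis `(1, [x₂], …, [xₙ])`: the map
`(f₁, …, fₙ) ↦ f₁(t)·1 + Σᵢ₌₂ⁿ fᵢ(t)·[xᵢ]` from `(k[t])ⁿ` to `A` is a bijection. -/
theorem stmt7 {X : Type*} (r : X × X → X × X)
    (hbr : IsBraided r)
    (hlnd : ∀ x : X, Function.Bijective fun y => (r (x, y)).1)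
    (hidem : r ∘ r = r)
    (n : ℕ) (hn : 2 ≤ n) (e : Fin n ≃ X)
    (k : Type*) [Field k] :
    Function.Bijective (fun g : Fin n → Polynomial k =>
      ∑ i : Fin n,
        (Polynomial.aeval
            (MonoidAlgebra.of k (ybCon r).Quotient ((ybCon r).mk' (FreeMonoid.of (e ⟨0, by omega⟩))))
            (g i)) *
          (if i = ⟨0, by omega⟩ then 1
            else MonoidAlgebra.of k (ybCon r).Quotient ((ybCon r).mk' (FreeMonoid.of (e i))))) := by
  classical
  let i0 : Fin n := ⟨0, by omega⟩
  show Function.Bijective (fun g : Fin n → Polynomial k =>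
    ∑ i : Fin n,
      (Polynomial.aeval
          (MonoidAlgebra.of k (ybCon r).Quotient ((ybCon r).mk' (FreeMonoid.of (e i0))))
          (g i)) *
        (if i = i0 then 1
          else MonoidAlgebra.of k (ybCon r).Quotient ((ybCon r).mk' (FreeMonoid.of (e i)))))
  set q : X := e i0 with hq
  -- the normal-form classes
  set B : ℕ × Fin n → (ybCon r).Quotient :=
    fun p => (ybCon r).mk' (nfWord e i0 p.1 p.2) with hB
  -- surjectivity of B
  have hNF : ∀ l : List X, ∃ p : ℕ × Fin n,
      ybCon r (FreeMonoid.ofList l) (nfWord e i0 p.1 p.2) := by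
    intro l
    induction l using List.reverseRecOn with
    | nil =>
        refine ⟨(0, i0), ?_⟩
        have h0 : nfWord e i0 0 i0 = FreeMonoid.ofList ([] : List X) := by
          rw [nfWord, if_pos rfl, mul_one]; rfl
        rw [h0]
        exact (ybCon r).refl _
    | append_singleton l y ih =>
        obtain ⟨⟨a, i⟩, hp⟩ := ih
        have h1 : ybCon r (FreeMonoid.ofList (l ++ [y])) (nfWord e i0 a i * FreeMonoid.of y) := by
          rw [FreeMonoid.ofList_append, FreeMonoid.ofList_singleton]
          exact (ybCon r).mul hp ((ybCon r).refl _)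
        by_cases hi : i = i0
        · obtain ⟨p', hp'⟩ := step_nfWord e i0 a y
          refine ⟨p', ?_⟩
          rw [nfWord, if_pos hi, mul_one] at h1
          rw [hp'] at h1
          exact h1
        · have h2 : ybCon r (nfWord e i0 a i * FreeMonoid.of y)
              (FreeMonoid.ofList (List.replicate (a + 1) (e i0)) *
                FreeMonoid.of (phi r hlnd q ((r (e i, y)).1))) := by
            rw [nfWord, if_neg hi, mul_assoc, List.replicate_succ', FreeMonoid.ofList_append,
              FreeMonoid.ofList_singleton, mul_assoc]
            exact (ybCon r).mul ((ybCon r).refl _) (two_letter r hlnd hidem q (e i) y)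
          obtain ⟨p', hp'⟩ := step_nfWord e i0 (a + 1) (phi r hlnd q ((r (e i, y)).1))
          refine ⟨p', ?_⟩
          rw [hp'] at h2
          exact h1.trans h2
  have hBsurj : Function.Surjective B := by
    intro s
    induction s using Con.induction_on with
    | _ w =>
        obtain ⟨p, hp⟩ := hNF (FreeMonoid.toList w)
        exact ⟨p, ((ybCon r).eq.mpr ((ybCon r).symm hp))⟩
  -- injectivity of B via the invariant
  have hle := ybCon_le_invCon r hlnd hbr hidem q
  have hstep_inj : ∀ (o : Option X) (x y : X),
      stepT r hlnd q o x = stepT r hlnd q o y → x = y := by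
    intro o x y h
    cases o with
    | none => simpa [stepT] using h
    | some s =>
        simp only [stepT, Option.some.injEq] at h
        have h2 : (r (s, x)).1 = (r (s, y)).1 := (ell r hlnd q).symm.injective h
        exact (hlnd s).1 h2
  have hrep : ∀ (a : ℕ) (x : X) (p : Option X),
      (List.replicate a q ++ [x]).foldl (stepT r hlnd q) p
        = stepT r hlnd q ((List.replicate a q).foldl (stepT r hlnd q) p) x := by
    intro a x p
    rw [List.foldl_append]
    rfl
  have hBinj : Function.Injective B := by
    rintro ⟨a, i⟩ ⟨b, j⟩ hmk
    have hcon : ybCon r (nfWord e i0 a i) (nfWord e i0 b j) := (ybCon r).eq.mp hmk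
    obtain ⟨hlen, hfold⟩ := Con.le_def.mp hle hcon
    rw [toList_nfWord, toList_nfWord] at hlen
    have hfold' := hfold none
    rw [toList_nfWord, toList_nfWord] at hfold'
    by_cases hi : i = i0 <;> by_cases hj : j = i0
    · rw [if_pos hi, if_pos hj] at hlen
      simp only [List.length_append, List.length_replicate, List.length_nil] at hlen
      exact Prod.ext (by omega) (hi.trans hj.symm)
    · exfalso
      rw [if_pos hi, if_neg hj] at hlen hfold'
      simp only [List.length_append, List.length_replicate, List.length_nil,
        List.length_cons] at hlen
      have hab : a = b + 1 := by omega
      subst hab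
      rw [List.append_nil] at hfold'
      rw [List.replicate_succ', hrep, hrep] at hfold'
      have := e.injective (hstep_inj _ _ _ hfold'.symm)
      simp_all
    · exfalso
      rw [if_neg hi, if_pos hj] at hlen hfold'
      simp only [List.length_append, List.length_replicate, List.length_nil,
        List.length_cons] at hlen
      have hab : b = a + 1 := by omega
      subst hab
      rw [List.append_nil] at hfold'
      rw [List.replicate_succ', hrep, hrep] at hfold'
      have := e.injective (hstep_inj _ _ _ hfold')
      simp_all
    · rw [if_neg hi, if_neg hj] at hlen hfold'
      simp only [List.length_append, List.length_replicate, List.length_cons,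
        List.length_nil] at hlen
      have hab : a = b := by omega
      subst hab
      rw [hrep, hrep] at hfold'
      exact Prod.ext rfl (e.injective (hstep_inj _ _ _ hfold'))
  -- the algebra computation
  set T : MonoidAlgebra k (ybCon r).Quotient :=
    MonoidAlgebra.of k (ybCon r).Quotient ((ybCon r).mk' (FreeMonoid.of q)) with hT
  have hTE : ∀ (a : ℕ) (i : Fin n),
      T ^ a * (if i = i0 then 1
          else MonoidAlgebra.of k (ybCon r).Quotient ((ybCon r).mk' (FreeMonoid.of (e i))))
        = MonoidAlgebra.of k (ybCon r).Quotient (B (a, i)) := by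
    intro a i
    by_cases hi : i = i0
    · rw [if_pos hi, mul_one, hT, ← map_pow, ← map_pow]
      show MonoidAlgebra.of k (ybCon r).Quotient ((ybCon r).mk' (FreeMonoid.of q ^ a))
          = MonoidAlgebra.of k (ybCon r).Quotient ((ybCon r).mk' (nfWord e i0 a i))
      rw [nfWord, if_pos hi, mul_one, ofList_replicate_pow]
    · rw [if_neg hi, hT, ← map_pow, ← map_mul, ← map_pow, ← map_mul]
      show MonoidAlgebra.of k (ybCon r).Quotient
            ((ybCon r).mk' (FreeMonoid.of q ^ a * FreeMonoid.of (e i)))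
          = MonoidAlgebra.of k (ybCon r).Quotient ((ybCon r).mk' (nfWord e i0 a i))
      rw [nfWord, if_neg hi, ofList_replicate_pow]
  have hkey : ∀ (p : Polynomial k) (i : Fin n),
      (Polynomial.aeval T) p * (if i = i0 then 1
          else MonoidAlgebra.of k (ybCon r).Quotient ((ybCon r).mk' (FreeMonoid.of (e i))))
        = ∑ a ∈ p.support, MonoidAlgebra.single (B (a, i)) (p.coeff a) := by
    intro p i
    rw [Polynomial.aeval_def, Polynomial.eval₂_eq_sum, Polynomial.sum_def, Finset.sum_mul]
    refine Finset.sum_congr rfl fun a _ => ?_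
    rw [mul_assoc, ← Algebra.smul_def, hTE a i, MonoidAlgebra.of_apply]
    rw [MonoidAlgebra.smul_single, smul_eq_mul, mul_one]
  have hFapp : ∀ (g : Fin n → Polynomial k) (a0 : ℕ) (j : Fin n),
      (∑ i : Fin n,
        (Polynomial.aeval T) (g i) * (if i = i0 then 1
          else MonoidAlgebra.of k (ybCon r).Quotient ((ybCon r).mk' (FreeMonoid.of (e i))))).coeff (B (a0, j))
        = (g j).coeff a0 := by
    intro g a0 j
    have happ : ∀ {ι : Type} (s : Finset ι) (f : ι → MonoidAlgebra k (ybCon r).Quotient)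
        (pt : (ybCon r).Quotient), (∑ i ∈ s, f i).coeff pt = ∑ i ∈ s, (f i).coeff pt := by
      intro ι s f pt
      classical
      induction s using Finset.induction with
      | empty => simp
      | @insert _ _ h ih => rw [Finset.sum_insert h, Finset.sum_insert h, MonoidAlgebra.coeff_add, Finsupp.add_apply, ih]
    rw [Finset.sum_congr rfl fun i _ => hkey (g i) i]
    rw [happ]
    rw [Finset.sum_congr rfl fun i _ => happ _ _ _]
    simp only [MonoidAlgebra.coeff_single_apply]
    have hiff : ∀ (a : ℕ) (i : Fin n), (B (a, i) = B (a0, j)) ↔ (a = a0 ∧ i = j) := by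
      intro a i
      rw [hBinj.eq_iff, Prod.mk.injEq]
    simp only [hiff]
    rw [Finset.sum_eq_single j
      (fun i _ hij => Finset.sum_eq_zero fun a _ => by simp [hij])
      (fun h => absurd (Finset.mem_univ j) h)]
    simp only [and_true]
    rw [Finset.sum_ite_eq' (g j).support a0 fun a => (g j).coeff a]
    split
    · rfl
    · exact (Polynomial.notMem_support_iff.mp (by assumption)).symm
  constructor
  · intro g h hgh
    funext j
    ext a0
    have h2 := congrArg (fun v : MonoidAlgebra k (ybCon r).Quotient => v.coeff (B (a0, j))) hgh
    simp only at h2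
    rw [hFapp g a0 j, hFapp h a0 j] at h2
    exact h2
  · intro v
    have hinj : ∀ i : Fin n, Function.Injective fun a => B (a, i) := by
      intro i a b hab
      have := hBinj hab
      exact congrArg Prod.fst this
    refine ⟨fun i => Polynomial.ofFinsupp
      (AddMonoidAlgebra.ofCoeff (Finsupp.comapDomain (fun a => B (a, i)) v.coeff ((hinj i).injOn))), ?_⟩
    refine MonoidAlgebra.ext (Finsupp.ext fun s => ?_)
    obtain ⟨⟨a0, j⟩, rfl⟩ := hBsurj s
    rw [hFapp]
    rw [Polynomial.coeff_ofFinsupp, AddMonoidAlgebra.coeff_ofCoeff]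
    rw [Finsupp.comapDomain_apply]
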